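/- Consider a transient MDP and risk level β > 0 as in the context, and define the sequence w^{t,⋆} ∈ ℝ^S by w^{0,⋆} = −𝟙 and w^{t,⋆} = L⋆ w^{t−1,⋆}. Assume liminf_{t→∞} w^{t,⋆}_s > −∞ for every state s. Then: the limit w^{∞,⋆} = lim_{t→∞} w^{t,⋆} exists and is finite; there exists a deterministic decision rule d⋆ : S → A such that w^{∞,⋆} = L^{d⋆} w^{∞,⋆}; w^{∞,⋆} is the unique vector satisfying this fixed-point equation for L^{d⋆}; and w^{∞,⋆} equals the limit of the iterates obtained by repeatedly applying L^{d⋆} starting from −𝟙 (i.e., it is the exponential value of the stationary policy d⋆). -/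

import Mathlib

set_option autoImplicit false
set_option maxHeartbeats 1000000

open Finset Filter Topology
set_option linter.unusedSectionVars false

noncomputable section

/-- The spectral radius of a real square matrix: the maximum modulus of its complex
eigenvalues. -/
def specRad {n : Type*} [Fintype n] [DecidableEq n] (M : Matrix n n ℝ) : ℝ :=
  sSup {x : ℝ | ∃ z : ℂ, z ∈ spectrum ℂ (M.map (Complex.ofReal : ℝ → ℂ)) ∧ x = ‖z‖}

/-- Termination probability `p_e(s,a) = 1 − Σ_{s'} p(s,a,s')` of a substochastic kernel. -/
def termProb {S A : Type*} [Fintype S] (p : S → A → S → ℝ) (s : S) (a : A) : ℝ :=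
  1 - ∑ s' : S, p s a s'

/-- The affine exponential Bellman operator `L^d w = B^d w − b^d` of a deterministic
decision rule `d`, with `B^d_{s,s'} = p(s,d(s),s')·exp(−β·r(s,d(s),s'))` and
`b^d_s = p_e(s,d(s))·exp(−β·r_e(s,d(s)))`. -/
def expBellman {S A : Type*} [Fintype S] (p : S → A → S → ℝ) (r : S → A → S → ℝ)
    (re : S → A → ℝ) (β : ℝ) (d : S → A) (w : S → ℝ) : S → ℝ :=
  fun s => (∑ s' : S, p s (d s) s' * Real.exp (-β * r s (d s) s') * w s')
    - termProb p s (d s) * Real.exp (-β * re s (d s))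

/-- The optimal exponential Bellman operator
`(L⋆ w)(s) = max_a ( Σ_{s'} p(s,a,s')·exp(−β·r(s,a,s'))·w_{s'} − p_e(s,a)·exp(−β·r_e(s,a)) )`. -/
def expBellmanOpt {S A : Type*} [Fintype S] [Fintype A] [Nonempty A] (p : S → A → S → ℝ)
    (r : S → A → S → ℝ) (re : S → A → ℝ) (β : ℝ) (w : S → ℝ) : S → ℝ :=
  fun s => ⨆ a : A, ((∑ s' : S, p s a s' * Real.exp (-β * r s a s') * w s')
    - termProb p s a * Real.exp (-β * re s a))

namespace ERMAux
open Matrix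

variable {S A : Type*} [Fintype S] [DecidableEq S] [Fintype A] [Nonempty A]

/-- The linear part (matrix action) of the exponential Bellman operator. -/
def Bop (p : S → A → S → ℝ) (r : S → A → S → ℝ) (β : ℝ) (d : S → A) (v : S → ℝ) : S → ℝ :=
  fun s => ∑ s' : S, p s (d s) s' * Real.exp (-β * r s (d s) s') * v s'

/-- The constant (termination) part of the exponential Bellman operator. -/
def bvec (p : S → A → S → ℝ) (re : S → A → ℝ) (β : ℝ) (d : S → A) : S → ℝ :=
  fun s => termProb p s (d s) * Real.exp (-β * re s (d s))

/-- Candidate value of action `a` in state `s`. -/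
def cand (p : S → A → S → ℝ) (r : S → A → S → ℝ) (re : S → A → ℝ) (β : ℝ)
    (w : S → ℝ) (s : S) (a : A) : ℝ :=
  (∑ s' : S, p s a s' * Real.exp (-β * r s a s') * w s')
    - termProb p s a * Real.exp (-β * re s a)

section Basic

variable (p : S → A → S → ℝ) (r : S → A → S → ℝ) (re : S → A → ℝ) (β : ℝ)

lemma expBellman_apply (d : S → A) (w : S → ℝ) (s : S) :
    expBellman p r re β d w s = cand p r re β w s (d s) := rfl

lemma expBellman_eq_Bop (d : S → A) (w : S → ℝ) (s : S) :
    expBellman p r re β d w s = Bop p r β d w s - bvec p re β d s := rfl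

lemma expBellmanOpt_apply (w : S → ℝ) (s : S) :
    expBellmanOpt p r re β w s = ⨆ a : A, cand p r re β w s a := rfl

lemma cand_le_opt (w : S → ℝ) (s : S) (a : A) :
    cand p r re β w s a ≤ expBellmanOpt p r re β w s :=
  le_ciSup (Set.Finite.bddAbove (Set.finite_range _)) a

lemma exists_greedy (w : S → ℝ) :
    ∃ d : S → A, ∀ s, expBellmanOpt p r re β w s = cand p r re β w s (d s) := by
  choose f hf using fun s => Finite.exists_max (fun a => cand p r re β w s a)
  exact ⟨f, fun s => le_antisymm (ciSup_le fun a => hf s a) (cand_le_opt p r re β w s (f s))⟩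

lemma cand_mono (hp0 : ∀ s a s', 0 ≤ p s a s') {v v' : S → ℝ} (h : ∀ s', v s' ≤ v' s')
    (s : S) (a : A) : cand p r re β v s a ≤ cand p r re β v' s a := by
  unfold cand
  refine sub_le_sub_right (Finset.sum_le_sum fun s' _ => ?_) _
  exact mul_le_mul_of_nonneg_left (h s') (mul_nonneg (hp0 s a s') (Real.exp_pos _).le)

lemma cand_add_const (w : S → ℝ) (c : ℝ) (s : S) (a : A) :
    cand p r re β (fun s' => w s' + c) s a
      = cand p r re β w s a + c * (∑ s' : S, p s a s' * Real.exp (-β * r s a s')) := by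
  unfold cand
  have : ∀ s' : S, p s a s' * Real.exp (-β * r s a s') * (w s' + c)
      = p s a s' * Real.exp (-β * r s a s') * w s'
        + c * (p s a s' * Real.exp (-β * r s a s')) := fun s' => by ring
  rw [Finset.sum_congr rfl fun s' _ => this s', Finset.sum_add_distrib, ← Finset.mul_sum]
  ring

lemma cand_sub_cand (w v : S → ℝ) (s : S) (a : A) :
    cand p r re β w s a - cand p r re β v s a
      = ∑ s' : S, p s a s' * Real.exp (-β * r s a s') * (w s' - v s') := by
  unfold cand
  rw [Finset.sum_congr rfl (fun s' _ => (mul_sub (p s a s' * Real.exp (-β * r s a s')) _ _)),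
    Finset.sum_sub_distrib]
  ring

lemma bvec_nonneg (hsub : ∀ s a, ∑ s' : S, p s a s' ≤ 1) (d : S → A) (s : S) :
    0 ≤ bvec p re β d s :=
  mul_nonneg (sub_nonneg.mpr (hsub s (d s))) (Real.exp_pos _).le

lemma Bop_mono (hp0 : ∀ s a s', 0 ≤ p s a s') (d : S → A) {u v : S → ℝ}
    (h : ∀ s, u s ≤ v s) (s : S) : Bop p r β d u s ≤ Bop p r β d v s :=
  Finset.sum_le_sum fun s' _ =>
    mul_le_mul_of_nonneg_left (h s') (mul_nonneg (hp0 s (d s) s') (Real.exp_pos _).le)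

lemma Bop_nonneg (hp0 : ∀ s a s', 0 ≤ p s a s') (d : S → A) {v : S → ℝ}
    (h : ∀ s, 0 ≤ v s) (s : S) : 0 ≤ Bop p r β d v s :=
  Finset.sum_nonneg fun s' _ =>
    mul_nonneg (mul_nonneg (hp0 s (d s) s') (Real.exp_pos _).le) (h s')

lemma Bop_smul (d : S → A) (c : ℝ) (v : S → ℝ) (s : S) :
    Bop p r β d (fun s' => c * v s') s = c * Bop p r β d v s := by
  unfold Bop
  rw [Finset.mul_sum]
  exact Finset.sum_congr rfl fun s' _ => by ring

lemma Bop_sub (d : S → A) (u v : S → ℝ) (s : S) :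
    Bop p r β d (fun s' => u s' - v s') s = Bop p r β d u s - Bop p r β d v s := by
  unfold Bop
  rw [← Finset.sum_sub_distrib]
  exact Finset.sum_congr rfl fun s' _ => by ring

lemma Bop_abs_le (hp0 : ∀ s a s', 0 ≤ p s a s') (d : S → A) (v : S → ℝ) (s : S) :
    |Bop p r β d v s| ≤ Bop p r β d (fun s' => |v s'|) s := by
  refine (Finset.abs_sum_le_sum_abs _ _).trans (Finset.sum_le_sum fun s' _ => ?_)
  rw [abs_mul, abs_of_nonneg (mul_nonneg (hp0 s (d s) s') (Real.exp_pos _).le)]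

end Basic

/-- A nonempty closed class on which the kernel is stochastic contradicts transience. -/
lemma closed_class_absurd (p : S → A → S → ℝ) (hp0 : ∀ s a s', 0 ≤ p s a s') (d : S → A)
    (htrans : specRad (Matrix.of fun s s' => p s (d s) s') < 1)
    (M : Finset S) (hne : M.Nonempty)
    (hstoch : ∀ s ∈ M, ∑ s' : S, p s (d s) s' = 1)
    (hclosed : ∀ s ∈ M, ∀ s', 0 < p s (d s) s' → s' ∈ M) : False := by
  classical
  set P : Matrix S S ℝ := Matrix.of fun s s' => p s (d s) s' with hP
  have hzero : ∀ s ∈ M, ∀ s' , s' ∉ M → p s (d s) s' = 0 := by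
    intro s hs s' hs'
    by_contra hne'
    exact hs' (hclosed s hs s' (lt_of_le_of_ne (hp0 s (d s) s') (Ne.symm hne')))
  haveI : Nonempty {x // x ∈ M} := ⟨⟨hne.choose, hne.choose_spec⟩⟩
  set Q : Matrix {x // x ∈ M} {x // x ∈ M} ℝ :=
    Matrix.of (fun a b : {x // x ∈ M} => p a.1 (d a.1) b.1) with hQ
  -- the all-ones vector is fixed by `Q`
  have hQone : Q.mulVec (fun _ => (1 : ℝ)) = fun _ => (1 : ℝ) := by
    funext a
    have h1 : ∑ b : {x // x ∈ M}, p a.1 (d a.1) b.1 = ∑ s' ∈ M, p a.1 (d a.1) s' :=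
      Finset.sum_coe_sort M (fun s' => p a.1 (d a.1) s')
    have h2 : ∑ s' ∈ M, p a.1 (d a.1) s' = ∑ s' : S, p a.1 (d a.1) s' :=
      Finset.sum_subset (Finset.subset_univ M) (fun x _ hx => hzero a.1 a.2 x hx)
    simp only [Matrix.mulVec, dotProduct, mul_one, hQ, Matrix.of_apply]
    rw [h1, h2, hstoch a.1 a.2]
  have hdetQ : ((1 : Matrix {x // x ∈ M} {x // x ∈ M} ℝ) - Q).det = 0 := by
    rw [← Matrix.exists_mulVec_eq_zero_iff]
    refine ⟨fun _ => (1 : ℝ), ?_, ?_⟩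
    · intro h
      have := congrFun h ⟨hne.choose, hne.choose_spec⟩
      simp at this
    · rw [Matrix.sub_mulVec, Matrix.one_mulVec, hQone, sub_self]
  have hdetQT : ((1 : Matrix {x // x ∈ M} {x // x ∈ M} ℝ) - Qᵀ).det = 0 := by
    have : (1 : Matrix {x // x ∈ M} {x // x ∈ M} ℝ) - Qᵀ
        = Matrix.transpose ((1 : Matrix {x // x ∈ M} {x // x ∈ M} ℝ) - Q) := by
      rw [Matrix.transpose_sub, Matrix.transpose_one]
    rw [this, Matrix.det_transpose, hdetQ]
  obtain ⟨yv, hyvne, hyv⟩ := Matrix.exists_mulVec_eq_zero_iff.mpr hdetQT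
  have hyfix : Qᵀ.mulVec yv = yv := by
    have := hyv
    rw [Matrix.sub_mulVec, Matrix.one_mulVec, sub_eq_zero] at this
    exact this.symm
  -- extend `yv` by zero to the whole state space
  set x : S → ℝ := fun s => if h : s ∈ M then yv ⟨s, h⟩ else 0 with hx
  have hxcoe : ∀ a : {x // x ∈ M}, x a.1 = yv a := by
    intro a
    simp only [hx, dif_pos a.2]
  have hxP : Pᵀ.mulVec x = x := by
    funext s'
    have hsum : ∀ s'' : S, (Pᵀ.mulVec x) s'' = ∑ s : S, p s (d s) s'' * x s := by
      intro s''
      simp only [Matrix.mulVec, dotProduct, Matrix.transpose_apply, hP, Matrix.of_apply]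
    have hres : ∑ s : S, p s (d s) s' * x s = ∑ a : {x // x ∈ M}, p a.1 (d a.1) s' * x a.1 := by
      rw [Finset.sum_coe_sort M (fun s => p s (d s) s' * x s)]
      refine (Finset.sum_subset (Finset.subset_univ M) fun s _ hs => ?_).symm
      simp [hx, dif_neg hs]
    by_cases h : s' ∈ M
    · have : ∑ a : {x // x ∈ M}, p a.1 (d a.1) s' * x a.1 = (Qᵀ.mulVec yv) ⟨s', h⟩ := by
        simp only [Matrix.mulVec, dotProduct, Matrix.transpose_apply, hQ, Matrix.of_apply]
        exact Finset.sum_congr rfl fun a _ => by rw [hxcoe a]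
      rw [hsum, hres, this, hyfix]
      simp only [hx, dif_pos h]
    · rw [hsum, hres]
      have : ∀ a : {x // x ∈ M}, p a.1 (d a.1) s' * x a.1 = 0 := by
        intro a
        rw [hzero a.1 a.2 s' h, zero_mul]
      rw [Finset.sum_congr rfl fun a _ => this a, Finset.sum_const_zero]
      simp [hx, dif_neg h]
  have hxne : x ≠ 0 := by
    obtain ⟨a, ha⟩ := Function.ne_iff.mp hyvne
    intro h
    have := congrFun h a.1
    rw [hxcoe a] at this
    exact ha this
  have hdetP : ((1 : Matrix S S ℝ) - P).det = 0 := by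
    have hT : ((1 : Matrix S S ℝ) - Pᵀ).det = 0 := by
      rw [← Matrix.exists_mulVec_eq_zero_iff]
      exact ⟨x, hxne, by rw [Matrix.sub_mulVec, Matrix.one_mulVec, hxP, sub_self]⟩
    have : (1 : Matrix S S ℝ) - Pᵀ = Matrix.transpose ((1 : Matrix S S ℝ) - P) := by
      rw [Matrix.transpose_sub, Matrix.transpose_one]
    rw [this, Matrix.det_transpose] at hT
    exact hT
  -- transfer to ℂ
  have hdetC : ((1 : Matrix S S ℂ) - P.map (Complex.ofReal : ℝ → ℂ)).det = 0 := by
    have hmap : ((1 : Matrix S S ℝ) - P).map (Complex.ofRealHom : ℝ →+* ℂ)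
        = (1 : Matrix S S ℂ) - P.map (Complex.ofReal : ℝ → ℂ) := by
      ext i j
      simp [Matrix.map_apply, Matrix.sub_apply, Matrix.one_apply, apply_ite]
    have := (Complex.ofRealHom : ℝ →+* ℂ).map_det ((1 : Matrix S S ℝ) - P)
    rw [RingHom.mapMatrix_apply, hmap] at this
    rw [← this, hdetP, map_zero]
  have hmem : (1 : ℂ) ∈ spectrum ℂ (P.map (Complex.ofReal : ℝ → ℂ)) := by
    rw [spectrum.mem_iff]
    intro hunit
    rw [Matrix.isUnit_iff_isUnit_det] at hunit
    have : (algebraMap ℂ (Matrix S S ℂ)) 1 = (1 : Matrix S S ℂ) := map_one _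
    rw [this, hdetC] at hunit
    exact hunit.ne_zero rfl
  have hbdd2 : BddAbove {xx : ℝ | ∃ z : ℂ,
      z ∈ spectrum ℂ (P.map (Complex.ofReal : ℝ → ℂ)) ∧ xx = ‖z‖} := by
    refine Set.Finite.bddAbove (Set.Finite.subset
      ((Matrix.finite_spectrum (P.map (Complex.ofReal : ℝ → ℂ))).image (fun z : ℂ => ‖z‖)) ?_)
    rintro xx ⟨z, hz, rfl⟩
    exact ⟨z, hz, rfl⟩
  have h1le : (1 : ℝ) ≤ specRad P :=
    le_csSup hbdd2 ⟨1, hmem, by simp⟩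
  linarith

/-- The maximum principle: if a decision rule admits a strictly positive strict
supersolution, then the iterates of its linear part converge to zero. -/
lemma iter_tendsto_zero (p : S → A → S → ℝ) (r : S → A → S → ℝ) (re : S → A → ℝ) (β : ℝ)
    (hp0 : ∀ s a s', 0 ≤ p s a s') (hsub : ∀ s a, ∑ s' : S, p s a s' ≤ 1)
    (d : S → A) (htrans : specRad (Matrix.of fun s s' => p s (d s) s') < 1)
    (z : S → ℝ) (hz : ∀ s, 0 < z s)
    (hle : ∀ s, Bop p r β d z s + bvec p re β d s ≤ z s) :
    ∀ (v : S → ℝ) (s : S), Tendsto (fun n => (Bop p r β d)^[n] v s) atTop (𝓝 0) := by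
  intro v s
  set Bo := Bop p r β d with hBo
  have hmono : ∀ {u u' : S → ℝ}, (∀ s, u s ≤ u' s) → ∀ s, Bo u s ≤ Bo u' s :=
    fun h s => Bop_mono p r β hp0 d h s
  have hBz_le : ∀ s, Bo z s ≤ z s := fun s =>
    le_trans (le_add_of_nonneg_right (bvec_nonneg p re β hsub d s)) (hle s)
  have hdec : ∀ n s, Bo^[n + 1] z s ≤ Bo^[n] z s := by
    intro n
    induction n with
    | zero => simpa using hBz_le
    | succ n ih =>
      intro s'
      have := hmono ih s'
      rwa [← Function.iterate_succ_apply' Bo n z, ← Function.iterate_succ_apply' Bo (n + 1) z]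
        at this
  have hpos : ∀ n s, 0 ≤ Bo^[n] z s := by
    intro n
    induction n with
    | zero => intro s'; exact (hz s').le
    | succ n ih =>
      intro s'
      rw [Function.iterate_succ_apply']
      exact Bop_nonneg p r β hp0 d ih s'
  have hant : ∀ s, Antitone fun n => Bo^[n] z s := fun s' =>
    antitone_nat_of_succ_le fun n => hdec n s'
  set y : S → ℝ := fun s => ⨅ n, Bo^[n] z s with hy
  have hty : ∀ s, Tendsto (fun n => Bo^[n] z s) atTop (𝓝 (y s)) := by
    intro s'
    refine tendsto_atTop_ciInf (hant s') ⟨0, ?_⟩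
    rintro x ⟨n, rfl⟩
    exact hpos n s'
  have hy0 : ∀ s, 0 ≤ y s := fun s' =>
    ge_of_tendsto (hty s') (Eventually.of_forall fun n => hpos n s')
  have hyαz0 : ∀ s, y s ≤ z s := fun s' =>
    le_of_tendsto (hty s') (Eventually.of_forall fun n => by
      simpa using hant s' (Nat.zero_le n))
  have hyfix : ∀ s, Bo y s = y s := by
    intro s'
    have h1 : Tendsto (fun n => Bo^[n + 1] z s') atTop (𝓝 (y s')) :=
      (hty s').comp (tendsto_add_atTop_nat 1)
    have h2 : Tendsto (fun n => Bo (Bo^[n] z) s') atTop (𝓝 (Bo y s')) := by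
      rw [hBo]
      unfold Bop
      exact tendsto_finset_sum _ fun s'' _ => (hty s'').const_mul _
    have h3 : (fun n => Bo (Bo^[n] z) s') = fun n => Bo^[n + 1] z s' := by
      funext n
      rw [Function.iterate_succ_apply']
    rw [h3] at h2
    exact tendsto_nhds_unique h2 h1
  have hy_eq : ∀ s, y s = 0 := by
    by_contra hcon
    push_neg at hcon
    obtain ⟨s₀, hs₀⟩ := hcon
    have hs₀' : 0 < y s₀ := lt_of_le_of_ne (hy0 s₀) (Ne.symm hs₀)
    haveI : Nonempty S := ⟨s₀⟩
    set α := Finset.univ.sup' Finset.univ_nonempty (fun s' => y s' / z s') with hα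
    have hαle : ∀ s', y s' / z s' ≤ α := fun s' => by
      rw [hα]; exact Finset.le_sup' (fun s' => y s' / z s') (Finset.mem_univ s')
    have hαpos : 0 < α := lt_of_lt_of_le (div_pos hs₀' (hz s₀)) (hαle s₀)
    have hyαz : ∀ s', y s' ≤ α * z s' := fun s' => (div_le_iff₀ (hz s')).mp (hαle s')
    obtain ⟨s₁, _, hs₁⟩ := Finset.exists_mem_eq_sup' Finset.univ_nonempty
      (fun s' => y s' / z s')
    have hs₁' : y s₁ = α * z s₁ := by
      rw [hα, hs₁]
      exact (div_mul_cancel₀ _ (hz s₁).ne').symm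
    set M : Finset S := Finset.univ.filter (fun s' => y s' = α * z s') with hM
    have hs₁M : s₁ ∈ M := by simp [hM, hs₁']
    have hkey : ∀ s' ∈ M, (∑ s'' : S, p s' (d s') s'' = 1)
        ∧ (∀ s'', 0 < p s' (d s') s'' → s'' ∈ M) := by
      intro t ht
      have hsy : y t = α * z t := by simpa [hM] using ht
      have e1 : Bo y t ≤ α * Bo z t := by
        rw [← Bop_smul p r β d α z t]
        exact hmono hyαz t
      have e3 : α * z t = Bo y t := by rw [← hsy, hyfix t]
      have e4 : Bo z t ≤ z t - bvec p re β d t := by linarith [hle t]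
      have h4 : α * Bo z t ≤ α * (z t - bvec p re β d t) :=
        mul_le_mul_of_nonneg_left e4 hαpos.le
      have h5 : α * bvec p re β d t ≤ 0 := by nlinarith [e3.le.trans e1, h4]
      have hble : bvec p re β d t ≤ 0 := by
        rw [← mul_zero α] at h5
        exact le_of_mul_le_mul_left h5 hαpos
      have hb0 : bvec p re β d t = 0 := le_antisymm hble (bvec_nonneg p re β hsub d t)
      have hterm : termProb p t (d t) = 0 := by
        rcases mul_eq_zero.mp hb0 with h | h
        · exact h
        · exact absurd h (Real.exp_pos _).ne'
      constructor
      · have := hterm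
        unfold termProb at this
        linarith
      · -- equality forcing
        have h7 : Bo y t = α * Bo z t := by
          refine le_antisymm e1 ?_
          rw [← e3]
          calc α * Bo z t ≤ α * (z t - bvec p re β d t) := h4
          _ = α * z t := by rw [hb0]; ring
        have hsum0 : ∑ s'' : S,
            p t (d t) s'' * Real.exp (-β * r t (d t) s'') * (α * z s'' - y s'') = 0 := by
          have hBsub : Bo (fun s'' => α * z s'' - y s'') t = α * Bo z t - Bo y t := by
            rw [hBo]
            rw [Bop_sub p r β d _ _ t]
            congr 1
            exact Bop_smul p r β d α z t
          have : Bo (fun s'' => α * z s'' - y s'') t = 0 := by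
            rw [hBsub, h7]; ring
          exact this
        intro s'' hps
        have hterms : ∀ s''' ∈ Finset.univ (α := S),
            0 ≤ p t (d t) s''' * Real.exp (-β * r t (d t) s''') * (α * z s''' - y s''') :=
          fun s''' _ => mul_nonneg (mul_nonneg (hp0 t (d t) s''') (Real.exp_pos _).le)
            (by linarith [hyαz s'''])
        have := (Finset.sum_eq_zero_iff_of_nonneg hterms).mp hsum0 s'' (Finset.mem_univ s'')
        have hcoef : 0 < p t (d t) s'' * Real.exp (-β * r t (d t) s'') :=
          mul_pos hps (Real.exp_pos _)
        have hz'' : α * z s'' - y s'' = 0 := by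
          rcases mul_eq_zero.mp this with h | h
          · exact absurd h hcoef.ne'
          · exact h
        simp only [hM, Finset.mem_filter, Finset.mem_univ, true_and]
        linarith
    exact closed_class_absurd p hp0 d htrans M ⟨s₁, hs₁M⟩
      (fun t ht => (hkey t ht).1) (fun t ht => (hkey t ht).2)
  -- now squeeze a general vector
  haveI : Nonempty S := ⟨s⟩
  set C := Finset.univ.sup' Finset.univ_nonempty (fun s' => |v s'| / z s') with hC
  have hCle : ∀ s', |v s'| / z s' ≤ C := fun s' => by
    rw [hC]; exact Finset.le_sup' (fun s' => |v s'| / z s') (Finset.mem_univ s')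
  have hCz : ∀ s', |v s'| ≤ C * z s' := fun s' => (div_le_iff₀ (hz s')).mp (hCle s')
  have hiter : ∀ n s', |Bo^[n] v s'| ≤ C * Bo^[n] z s' := by
    intro n
    induction n with
    | zero => intro s'; simpa using hCz s'
    | succ n ih =>
      intro s'
      rw [Function.iterate_succ_apply', Function.iterate_succ_apply']
      calc |Bo (Bo^[n] v) s'| ≤ Bo (fun s'' => |Bo^[n] v s''|) s' :=
            Bop_abs_le p r β hp0 d _ s'
      _ ≤ Bo (fun s'' => C * Bo^[n] z s'') s' := hmono (fun s'' => ih s'') s'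
      _ = C * Bo (Bo^[n] z) s' := Bop_smul p r β d C _ s'
  have hCz0 : Tendsto (fun n => C * Bo^[n] z s) atTop (𝓝 0) := by
    have h0 : Tendsto (fun n => Bo^[n] z s) atTop (𝓝 0) := hy_eq s ▸ hty s
    simpa using h0.const_mul C
  exact squeeze_zero_norm (fun n => by simpa [Real.norm_eq_abs] using hiter n s) hCz0

lemma eventually_shift {Q : ℕ → Prop} (h : ∀ᶠ t in atTop, Q (t + 1)) :
    ∀ᶠ t in atTop, Q t := by
  rw [eventually_atTop] at h ⊢
  obtain ⟨N, hN⟩ := h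
  refine ⟨N + 1, fun t ht => ?_⟩
  obtain ⟨k, rfl⟩ : ∃ k, t = k + 1 := ⟨t - 1, by omega⟩
  exact hN k (by omega)

lemma exists_lb {u : ℕ → ℝ}
    (h : (⊥ : EReal) < Filter.liminf (fun t : ℕ => ((u t : ℝ) : EReal)) Filter.atTop) :
    ∃ c : ℝ, ∀ t, c ≤ u t := by
  obtain ⟨x, hx1, hx2⟩ := exists_between h
  have hxT : x ≠ ⊤ := (lt_of_lt_of_le hx2 le_top).ne
  have hx : x = ((x.toReal : ℝ) : EReal) := (EReal.coe_toReal hxT hx1.ne').symm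
  rw [hx] at hx2
  have hev : ∀ᶠ t in atTop, ((x.toReal : ℝ) : EReal) < ((u t : ℝ) : EReal) :=
    eventually_lt_of_lt_liminf hx2
  have hev' : ∀ᶠ t in atTop, x.toReal < u t := hev.mono fun t ht => by exact_mod_cast ht
  obtain ⟨N, hN⟩ := eventually_atTop.mp hev'
  refine ⟨min x.toReal ((Finset.range (N + 1)).inf' (by simp) u), fun t => ?_⟩
  rcases le_or_gt t N with ht | ht
  · exact (min_le_right _ _).trans (Finset.inf'_le u (by simp; omega))
  · exact (min_le_left _ _).trans (hN t (by omega)).le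

end ERMAux

open ERMAux

/-- In a transient MDP, if the optimal exponential value iterates `w^{t,⋆}` (starting from
`−𝟙`) have all components with `liminf > −∞`, then they converge to a finite limit `w^{∞,⋆}`,
there is a deterministic decision rule `d⋆` with `w^{∞,⋆} = L^{d⋆} w^{∞,⋆}`, the limit is the
unique fixed point of `L^{d⋆}`, and it equals the limit of iterating `L^{d⋆}` from `−𝟙`
(the exponential value of the stationary policy `d⋆`). -/
theorem optimal_exp_value_iteration_converges {S A : Type*}
    [Fintype S] [DecidableEq S] [Fintype A] [Nonempty A]
    (p : S → A → S → ℝ) (r : S → A → S → ℝ) (re : S → A → ℝ) (β : ℝ) (hβ : 0 < β)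
    (hp0 : ∀ s a s', 0 ≤ p s a s') (hsub : ∀ s a, ∑ s' : S, p s a s' ≤ 1)
    (htrans : ∀ d : S → A, specRad (Matrix.of fun s s' => p s (d s) s') < 1)
    (w : ℕ → S → ℝ) (hw0 : w 0 = fun _ => -1)
    (hwrec : ∀ t : ℕ, w (t + 1) = expBellmanOpt p r re β (w t))
    (hbdd : ∀ s : S, (⊥ : EReal) < Filter.liminf (fun t : ℕ => ((w t s : ℝ) : EReal))
      Filter.atTop) :
    ∃ (winf : S → ℝ) (dstar : S → A),
      Filter.Tendsto w Filter.atTop (nhds winf) ∧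
      expBellman p r re β dstar winf = winf ∧
      (∀ u : S → ℝ, expBellman p r re β dstar u = u → u = winf) ∧
      Filter.Tendsto (fun t : ℕ => (expBellman p r re β dstar)^[t] (fun _ => (-1 : ℝ)))
        Filter.atTop (nhds winf) := by
  classical
  -- the iterates are nonpositive
  have hub : ∀ t s, w t s ≤ 0 := by
    intro t
    induction t with
    | zero => intro s; rw [hw0]; norm_num
    | succ t ih =>
      intro s
      rw [hwrec t, expBellmanOpt_apply]
      refine ciSup_le fun a => ?_
      have h1 : ∑ s' : S, p s a s' * Real.exp (-β * r s a s') * w t s' ≤ 0 :=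
        Finset.sum_nonpos fun s' _ => mul_nonpos_of_nonneg_of_nonpos
          (mul_nonneg (hp0 s a s') (Real.exp_pos _).le) (ih s')
      have h2 : 0 ≤ termProb p s a * Real.exp (-β * re s a) :=
        mul_nonneg (sub_nonneg.mpr (hsub s a)) (Real.exp_pos _).le
      simp only [cand]
      linarith
  -- the iterates are uniformly bounded below
  obtain ⟨c, hc⟩ : ∃ c : ℝ, ∀ t s, c ≤ w t s := by
    have h1 : ∀ s : S, ∃ cs : ℝ, ∀ t, cs ≤ w t s := fun s => exists_lb (hbdd s)
    choose cs hcs using h1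
    obtain ⟨c, hc⟩ := (Set.finite_range cs).bddBelow
    exact ⟨c, fun t s => (hc ⟨s, rfl⟩).trans (hcs s t)⟩
  have hBU : ∀ s, IsBoundedUnder (· ≤ ·) atTop (fun t => w t s) := fun s =>
    isBoundedUnder_of ⟨0, fun t => hub t s⟩
  have hBL : ∀ s, IsBoundedUnder (· ≥ ·) atTop (fun t => w t s) := fun s =>
    isBoundedUnder_of ⟨c, fun t => hc t s⟩
  have hCBle : ∀ s, IsCoboundedUnder (· ≤ ·) atTop (fun t => w t s) := fun s =>
    (hBL s).isCoboundedUnder_le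
  have hCBge : ∀ s, IsCoboundedUnder (· ≥ ·) atTop (fun t => w t s) := fun s =>
    (hBU s).isCoboundedUnder_ge
  set Wf : S → ℝ := fun s => limsup (fun t => w t s) atTop with hWf
  set mf : S → ℝ := fun s => liminf (fun t => w t s) atTop with hmf
  have hmW : ∀ s, mf s ≤ Wf s := fun s => liminf_le_limsup (hBU s) (hBL s)
  have hW0 : ∀ s, Wf s ≤ 0 := fun s =>
    limsup_le_of_le (hCBle s) (Eventually.of_forall fun t => hub t s)
  -- a uniform bound on the rows of the exponential transition matrices
  obtain ⟨K, hK0, hKb⟩ : ∃ K : ℝ, 0 ≤ K ∧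
      ∀ s a, (∑ s' : S, p s a s' * Real.exp (-β * r s a s')) ≤ K := by
    obtain ⟨K0, hK0b⟩ := (Set.finite_range
      (fun sa : S × A => ∑ s' : S, p sa.1 sa.2 s' * Real.exp (-β * r sa.1 sa.2 s'))).bddAbove
    exact ⟨max K0 0, le_max_right _ _, fun s a =>
      (hK0b ⟨(s, a), rfl⟩).trans (le_max_left _ _)⟩
  -- limsup is a subsolution
  have hWle : ∀ s, Wf s ≤ expBellmanOpt p r re β Wf s := by
    intro s
    refine le_of_forall_pos_le_add fun ε hε => ?_
    set ε' := ε / (K + 1) with hε'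
    have hε'pos : 0 < ε' := div_pos hε (by linarith)
    have hev : ∀ᶠ t in atTop, ∀ s' : S, w t s' ≤ Wf s' + ε' := by
      rw [Filter.eventually_all]
      intro s'
      have hlt : limsup (fun t => w t s') atTop < Wf s' + ε' := by
        simp only [hWf]; linarith
      exact (eventually_lt_of_limsup_lt hlt (hBU s')).mono fun t ht => ht.le
    have hstep : ∀ᶠ t in atTop, w (t + 1) s ≤ expBellmanOpt p r re β Wf s + ε := by
      refine hev.mono fun t ht => ?_
      rw [hwrec t, expBellmanOpt_apply]
      refine ciSup_le fun a => ?_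
      have hcalc1 : cand p r re β (w t) s a ≤ cand p r re β (fun s' => Wf s' + ε') s a :=
        cand_mono p r re β hp0 (fun s' => ht s') s a
      have hcalc2 := cand_add_const p r re β Wf ε' s a
      have h1 := cand_le_opt p r re β Wf s a
      have h2 : ε' * (∑ s' : S, p s a s' * Real.exp (-β * r s a s')) ≤ ε' * (K + 1) :=
        mul_le_mul_of_nonneg_left (by linarith [hKb s a]) hε'pos.le
      have h3 : ε' * (K + 1) = ε := by
        rw [hε']; exact div_mul_cancel₀ ε (by linarith : K + 1 ≠ 0)
      linarith
    have hsh : ∀ᶠ t in atTop, w t s ≤ expBellmanOpt p r re β Wf s + ε :=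
      eventually_shift hstep
    exact limsup_le_of_le (hCBle s) hsh
  -- liminf is a supersolution
  have hmge : ∀ s, expBellmanOpt p r re β mf s ≤ mf s := by
    intro s
    refine le_of_forall_pos_le_add fun ε hε => ?_
    set ε' := ε / (K + 1) with hε'
    have hε'pos : 0 < ε' := div_pos hε (by linarith)
    have hev : ∀ᶠ t in atTop, ∀ s' : S, mf s' - ε' ≤ w t s' := by
      rw [Filter.eventually_all]
      intro s'
      have hlt : mf s' - ε' < liminf (fun t => w t s') atTop := by
        simp only [hmf]; linarith
      exact (eventually_lt_of_lt_liminf hlt (hBL s')).mono fun t ht => ht.le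
    obtain ⟨a₀, ha₀⟩ : ∃ a₀ : A, expBellmanOpt p r re β mf s = cand p r re β mf s a₀ := by
      obtain ⟨dm, hdm⟩ := exists_greedy p r re β mf
      exact ⟨dm s, hdm s⟩
    have hstep : ∀ᶠ t in atTop, expBellmanOpt p r re β mf s - ε ≤ w (t + 1) s := by
      refine hev.mono fun t ht => ?_
      rw [hwrec t]
      have h1 : cand p r re β (fun s' => mf s' - ε') s a₀ ≤ cand p r re β (w t) s a₀ :=
        cand_mono p r re β hp0 (fun s' => ht s') s a₀
      have h2 : cand p r re β (fun s' => mf s' + -ε') s a₀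
          = cand p r re β mf s a₀ + (-ε') * (∑ s' : S, p s a₀ s' * Real.exp (-β * r s a₀ s')) :=
        cand_add_const p r re β mf (-ε') s a₀
      have h2' : cand p r re β (fun s' => mf s' - ε') s a₀
          = cand p r re β mf s a₀ - ε' * (∑ s' : S, p s a₀ s' * Real.exp (-β * r s a₀ s')) := by
        rw [show (fun s' => mf s' - ε') = (fun s' => mf s' + -ε') from funext fun s' => by ring,
          h2]
        ring
      have h3 := cand_le_opt p r re β (w t) s a₀
      have h4 : ε' * (∑ s' : S, p s a₀ s' * Real.exp (-β * r s a₀ s')) ≤ ε' * (K + 1) :=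
        mul_le_mul_of_nonneg_left (by linarith [hKb s a₀]) hε'pos.le
      have h5 : ε' * (K + 1) = ε := by
        rw [hε']; exact div_mul_cancel₀ ε (by linarith : K + 1 ≠ 0)
      linarith
    have hsh : ∀ᶠ t in atTop, expBellmanOpt p r re β mf s - ε ≤ w t s :=
      eventually_shift hstep
    have hli : expBellmanOpt p r re β mf s - ε ≤ liminf (fun t => w t s) atTop :=
      le_liminf_of_le (hCBge s) hsh
    have hli' : expBellmanOpt p r re β mf s - ε ≤ mf s := hli
    linarith
  -- greedy rule at the limsup
  obtain ⟨dW, hdW⟩ := exists_greedy p r re β Wf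
  -- the limsup is strictly negative
  have hWneg : ∀ s, Wf s < 0 := by
    by_contra hcon
    push_neg at hcon
    obtain ⟨s₀, hs₀⟩ := hcon
    have hW00 : Wf s₀ = 0 := le_antisymm (hW0 s₀) hs₀
    set M : Finset S := Finset.univ.filter (fun s => Wf s = 0) with hM
    have hkey : ∀ s ∈ M, (∑ s' : S, p s (dW s) s' = 1)
        ∧ (∀ s', 0 < p s (dW s) s' → s' ∈ M) := by
      intro s hs
      have hWs : Wf s = 0 := by simpa [hM] using hs
      have h1 : Wf s ≤ cand p r re β Wf s (dW s) := (hWle s).trans_eq (hdW s)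
      have h2 : ∑ s' : S, p s (dW s) s' * Real.exp (-β * r s (dW s) s') * Wf s' ≤ 0 :=
        Finset.sum_nonpos fun s' _ => mul_nonpos_of_nonneg_of_nonpos
          (mul_nonneg (hp0 _ _ _) (Real.exp_pos _).le) (hW0 s')
      have hbnn : 0 ≤ termProb p s (dW s) * Real.exp (-β * re s (dW s)) :=
        mul_nonneg (sub_nonneg.mpr (hsub _ _)) (Real.exp_pos _).le
      have h3 : termProb p s (dW s) * Real.exp (-β * re s (dW s))
          ≤ ∑ s' : S, p s (dW s) s' * Real.exp (-β * r s (dW s) s') * Wf s' := by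
        have h1' := h1
        rw [hWs] at h1'
        simp only [cand] at h1'
        linarith
      have hb0 : termProb p s (dW s) * Real.exp (-β * re s (dW s)) = 0 :=
        le_antisymm (h3.trans h2) hbnn
      have hsum0 : ∑ s' : S, p s (dW s) s' * Real.exp (-β * r s (dW s) s') * Wf s' = 0 :=
        le_antisymm h2 (by rw [← hb0]; exact h3)
      constructor
      · have hterm : termProb p s (dW s) = 0 := by
          rcases mul_eq_zero.mp hb0 with h | h
          · exact h
          · exact absurd h (Real.exp_pos _).ne'
        unfold termProb at hterm
        linarith
      · intro s' hp'
        have hterms : ∀ s'' ∈ Finset.univ (α := S),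
            p s (dW s) s'' * Real.exp (-β * r s (dW s) s'') * Wf s'' ≤ 0 :=
          fun s'' _ => mul_nonpos_of_nonneg_of_nonpos
            (mul_nonneg (hp0 _ _ _) (Real.exp_pos _).le) (hW0 s'')
        have h6 := (Finset.sum_eq_zero_iff_of_nonpos hterms).mp hsum0 s' (Finset.mem_univ s')
        have hcoef : 0 < p s (dW s) s' * Real.exp (-β * r s (dW s) s') :=
          mul_pos hp' (Real.exp_pos _)
        have hW' : Wf s' = 0 := by
          rcases mul_eq_zero.mp h6 with h | h
          · exact absurd h hcoef.ne'
          · exact h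
        simp [hM, hW']
    exact closed_class_absurd p hp0 dW (htrans dW) M ⟨s₀, by simp [hM, hW00]⟩
      (fun t ht => (hkey t ht).1) (fun t ht => (hkey t ht).2)
  -- the positive supersolution
  set z : S → ℝ := fun s => -Wf s with hzdef
  have hzpos : ∀ s, 0 < z s := fun s => by simp only [hzdef]; linarith [hWneg s]
  have hBopneg : ∀ (d : S → A) (s : S),
      Bop p r β d z s = -Bop p r β d Wf s := by
    intro d s
    have h1 := Bop_smul p r β d (-1) Wf s
    simp only [neg_mul, one_mul, neg_one_mul] at h1
    simpa [hzdef] using h1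
  have hzle : ∀ s, Bop p r β dW z s + bvec p re β dW s ≤ z s := by
    intro s
    have h1 : Wf s ≤ cand p r re β Wf s (dW s) := (hWle s).trans_eq (hdW s)
    have h1' : Wf s ≤ Bop p r β dW Wf s - bvec p re β dW s := h1
    have h2 := hBopneg dW s
    have h3 : z s = -Wf s := by simp only [hzdef]
    linarith
  have htend := iter_tendsto_zero p r re β hp0 hsub dW (htrans dW) z hzpos hzle
  -- the limsup and liminf agree
  have hgle : ∀ s, Wf s - mf s ≤ Bop p r β dW (fun s' => Wf s' - mf s') s := by
    intro s
    have h1 : Wf s ≤ cand p r re β Wf s (dW s) := (hWle s).trans_eq (hdW s)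
    have h2 : cand p r re β mf s (dW s) ≤ mf s :=
      (cand_le_opt p r re β mf s (dW s)).trans (hmge s)
    have h3 : cand p r re β Wf s (dW s) - cand p r re β mf s (dW s)
        = Bop p r β dW (fun s' => Wf s' - mf s') s :=
      cand_sub_cand p r re β Wf mf s (dW s)
    linarith
  have hgiter : ∀ n s, Wf s - mf s ≤ (Bop p r β dW)^[n] (fun s' => Wf s' - mf s') s := by
    intro n
    induction n with
    | zero => intro s; simp
    | succ n ih =>
      intro s
      have h5 : Bop p r β dW (fun s' => Wf s' - mf s') s
          ≤ Bop p r β dW ((Bop p r β dW)^[n] (fun s' => Wf s' - mf s')) s :=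
        Bop_mono p r β hp0 dW ih s
      have h6 := (hgle s).trans h5
      rwa [← Function.iterate_succ_apply' (Bop p r β dW) n (fun s' => Wf s' - mf s')] at h6
  have hgzero : ∀ s, Wf s = mf s := by
    intro s
    have h6 : Wf s - mf s ≤ 0 :=
      ge_of_tendsto (htend (fun s' => Wf s' - mf s') s)
        (Eventually.of_forall fun n => hgiter n s)
    linarith [hmW s]
  -- convergence of the iterates
  have htendw : Tendsto w atTop (𝓝 Wf) := by
    rw [tendsto_pi_nhds]
    intro s
    refine tendsto_of_liminf_eq_limsup ?_ ?_ (hBU s) (hBL s)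
    · rw [hgzero s]
    · rfl
  -- fixed point of the optimal operator
  have hopt_fix : ∀ s, expBellmanOpt p r re β Wf s = Wf s := by
    intro s
    have h3 : expBellmanOpt p r re β Wf s ≤ Wf s := by
      have hfun : mf = Wf := funext fun s' => (hgzero s').symm
      rw [← hfun]
      exact hmge s
    exact le_antisymm h3 (hWle s)
  obtain ⟨ds, hds⟩ := exists_greedy p r re β Wf
  have hfix : expBellman p r re β ds Wf = Wf := by
    funext s
    rw [expBellman_apply, ← hds s, hopt_fix s]
  have hzle2 : ∀ s, Bop p r β ds z s + bvec p re β ds s ≤ z s := by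
    intro s
    have h1 : Wf s = cand p r re β Wf s (ds s) := (hopt_fix s).symm.trans (hds s)
    have h1' : Wf s ≤ Bop p r β ds Wf s - bvec p re β ds s := h1.le
    have h2 := hBopneg ds s
    have h3 : z s = -Wf s := by simp only [hzdef]
    linarith
  have htend2 := iter_tendsto_zero p r re β hp0 hsub ds (htrans ds) z hzpos hzle2
  -- uniqueness of the fixed point
  have huniq : ∀ u : S → ℝ, expBellman p r re β ds u = u → u = Wf := by
    intro u hu
    have hdiff : ∀ s, Bop p r β ds (fun s' => u s' - Wf s') s = u s - Wf s := by
      intro s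
      have h1 : cand p r re β u s (ds s) = u s := congrFun hu s
      have h2 : cand p r re β Wf s (ds s) = Wf s := congrFun hfix s
      have h3 : cand p r re β u s (ds s) - cand p r re β Wf s (ds s)
          = Bop p r β ds (fun s' => u s' - Wf s') s :=
        cand_sub_cand p r re β u Wf s (ds s)
      linarith
    have hiter : ∀ n s, (Bop p r β ds)^[n] (fun s' => u s' - Wf s') s = u s - Wf s := by
      intro n
      induction n with
      | zero => intro s; simp
      | succ n ih =>
        intro s
        rw [Function.iterate_succ_apply']
        have hfun : (Bop p r β ds)^[n] (fun s' => u s' - Wf s') = fun s' => u s' - Wf s' :=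
          funext fun s' => ih s'
        rw [hfun]
        exact hdiff s
    funext s
    have h0 := htend2 (fun s' => u s' - Wf s') s
    have hconst : Tendsto (fun n => (Bop p r β ds)^[n] (fun s' => u s' - Wf s') s)
        atTop (𝓝 (u s - Wf s)) := by
      simp only [hiter]
      exact tendsto_const_nhds
    have := tendsto_nhds_unique hconst h0
    exact sub_eq_zero.mp this
  -- the policy iterates converge to the same limit
  have hitfix : ∀ (n : ℕ) (v : S → ℝ), (expBellman p r re β ds)^[n] v
      = fun s => Wf s + (Bop p r β ds)^[n] (fun s' => v s' - Wf s') s := by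
    intro n
    induction n with
    | zero => intro v; funext s; simp
    | succ n ih =>
      intro v
      rw [Function.iterate_succ_apply', ih v]
      funext s
      have h2 : cand p r re β Wf s (ds s) = Wf s := congrFun hfix s
      have h3 : cand p r re β (fun s' => Wf s' + (Bop p r β ds)^[n]
            (fun s'' => v s'' - Wf s'') s') s (ds s) - cand p r re β Wf s (ds s)
          = Bop p r β ds (fun s' => (Wf s' + (Bop p r β ds)^[n]
            (fun s'' => v s'' - Wf s'') s') - Wf s') s :=
        cand_sub_cand p r re β _ Wf s (ds s)
      have h4 : Bop p r β ds (fun s' => (Wf s' + (Bop p r β ds)^[n]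
            (fun s'' => v s'' - Wf s'') s') - Wf s') s
          = Bop p r β ds ((Bop p r β ds)^[n] (fun s'' => v s'' - Wf s'')) s := by
        congr 1
        funext s'
        ring
      rw [expBellman_apply]
      rw [Function.iterate_succ_apply' (Bop p r β ds) n]
      rw [h4] at h3
      linarith
  refine ⟨Wf, ds, htendw, hfix, huniq, ?_⟩
  rw [tendsto_pi_nhds]
  intro s
  have h0 := htend2 (fun s' => (-1 : ℝ) - Wf s') s
  have heq : (fun t : ℕ => (expBellman p r re β ds)^[t] (fun _ => (-1 : ℝ)) s)
      = fun t : ℕ => Wf s + (Bop p r β ds)^[t] (fun s' => (-1 : ℝ) - Wf s') s := by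
    funext t
    rw [hitfix t (fun _ => (-1 : ℝ))]
  rw [heq]
  simpa using h0.const_add (Wf s)
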